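/- Geometric dyadic stacking lemma (parabolic Calderón–Zygmund): Let Q be a parabolic cube in ℝ^n × ℝ, m ∈ ℕ, and A, B ⊂ Q measurable subsets. Assume |A| ≤ δ|Q| for some δ ∈ (0,1), and assume that for every parabolic dyadic subcube K of Q, |K ∩ A| > δ|K| implies K̄^m ⊂ B, where K̄^m denotes the set obtained by stacking m copies of the predecessor of K in the time direction. Then |A| ≤ ((m+1)/m) δ |B|. -/

import Mathlib

open MeasureTheory Set ENNReal NNReal

/-- A parabolic cube `L × (t, t + h²)` with spatial cube `∏ᵢ (xᵢ, xᵢ + h)`. -/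
structure PCube (n : ℕ) where
  x : Fin n → ℝ
  h : ℝ
  t : ℝ

namespace PCube

variable {n : ℕ}

/-- The underlying set of a parabolic cube. -/
def toSet (K : PCube n) : Set ((Fin n → ℝ) × ℝ) :=
  {p | (∀ i, p.1 i ∈ Set.Ioo (K.x i) (K.x i + K.h)) ∧ p.2 ∈ Set.Ioo K.t (K.t + K.h ^ 2)}

/-- The `2^{n+2}` parabolic dyadic children: the spatial cube is halved in each direction
and the time interval is split into four equal parts. -/
noncomputable def child (K : PCube n) (v : Fin n → Fin 2) (j : Fin 4) : PCube n :=
  ⟨fun i => K.x i + (v i : ℝ) * (K.h / 2), K.h / 2, K.t + (j : ℝ) * (K.h / 2) ^ 2⟩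

/-- `K` is one of the dyadic children of `P`. -/
def isChild (P K : PCube n) : Prop := ∃ v j, K = P.child v j

/-- The set `K̄^m` obtained from a cube `P = L' × (a', b')` by stacking `m` copies of it
on top in time: `L' × (b', b' + m (b' - a'))`. -/
def stack (P : PCube n) (m : ℕ) : Set ((Fin n → ℝ) × ℝ) :=
  {p | (∀ i, p.1 i ∈ Set.Ioo (P.x i) (P.x i + P.h)) ∧
    p.2 ∈ Set.Ioo (P.t + P.h ^ 2) (P.t + P.h ^ 2 + (m : ℝ) * P.h ^ 2)}

end PCube


namespace Stmt3Aux

variable {n : ℕ}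

abbrev Ω (n : ℕ) := (Fin n → ℝ) × ℝ

/-- Index of a dyadic subcube: level, spatial index, time index. -/
abbrev D (n : ℕ) := ℕ × (Fin n → ℕ) × ℕ

noncomputable def eh (Q : PCube n) (k : ℕ) : ℝ := Q.h / 2 ^ k

lemma eh_pos {Q : PCube n} (hQ : 0 < Q.h) (k : ℕ) : 0 < eh Q k := by
  unfold eh; positivity

lemma eh_succ (Q : PCube n) (k : ℕ) : eh Q (k + 1) = eh Q k / 2 := by
  unfold eh; rw [pow_succ]; ring

lemma eh_anti {Q : PCube n} (hQ : 0 < Q.h) {j k : ℕ} (h : j ≤ k) : eh Q k ≤ eh Q j := by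
  unfold eh
  apply div_le_div_of_nonneg_left hQ.le (by positivity)
  exact pow_le_pow_right₀ one_le_two h

lemma eh_mul (Q : PCube n) (j k : ℕ) (h : j ≤ k) : eh Q j = 2 ^ (k - j) * eh Q k := by
  unfold eh
  have h2 : (2:ℝ)^k = 2^(k-j) * 2^j := by rw [← pow_add]; congr 1; omega
  rw [h2]
  field_simp

/-- The dyadic subcube of `Q` with index `d`. -/
noncomputable def dc (Q : PCube n) (d : D n) : PCube n :=
  ⟨fun i => Q.x i + d.2.1 i * eh Q d.1, eh Q d.1, Q.t + d.2.2 * eh Q d.1 ^ 2⟩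

def dvalid (d : D n) : Prop := (∀ i, d.2.1 i < 2 ^ d.1) ∧ d.2.2 < 4 ^ d.1

lemma dc_h (Q : PCube n) (d : D n) : (dc Q d).h = eh Q d.1 := rfl

lemma mem_dc {Q : PCube n} {d : D n} {p : Ω n} :
    p ∈ (dc Q d).toSet ↔
      (∀ i, Q.x i + d.2.1 i * eh Q d.1 < p.1 i ∧ p.1 i < Q.x i + (d.2.1 i + 1) * eh Q d.1) ∧
      (Q.t + d.2.2 * eh Q d.1 ^ 2 < p.2 ∧ p.2 < Q.t + (d.2.2 + 1) * eh Q d.1 ^ 2) := by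
  simp only [PCube.toSet, dc, Set.mem_setOf_eq, Set.mem_Ioo]
  constructor
  · rintro ⟨h1, h2, h3⟩
    refine ⟨fun i => ⟨(h1 i).1, by have := (h1 i).2; ring_nf at this ⊢; linarith⟩,
      h2, by ring_nf at h3 ⊢; linarith⟩
  · rintro ⟨h1, h2, h3⟩
    refine ⟨fun i => ⟨(h1 i).1, by have := (h1 i).2; ring_nf at this ⊢; linarith⟩,
      h2, by ring_nf at h3 ⊢; linarith⟩

lemma dc_zero (Q : PCube n) : dc Q (0, fun _ => 0, 0) = Q := by
  cases Q
  simp [dc, eh]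

lemma dc_child (Q : PCube n) (k : ℕ) (a : Fin n → ℕ) (b : ℕ) (v : Fin n → Fin 2) (j : Fin 4) :
    (dc Q (k, a, b)).child v j = dc Q (k + 1, (fun i => 2 * a i + v i), 4 * b + j) := by
  have h2 : eh Q k = 2 * eh Q (k + 1) := by rw [eh_succ]; ring
  simp only [PCube.child, dc, h2]
  refine PCube.mk.injEq _ _ _ _ _ _ ▸ ⟨funext fun i => ?_, ?_, ?_⟩ <;> push_cast <;> ring

/-- Every valid dyadic index gives a cube reachable from `Q` by taking children. -/
lemma reach (Q : PCube n) (d : D n) (hd : dvalid d) :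
    Relation.ReflTransGen PCube.isChild Q (dc Q d) := by
  obtain ⟨k, a, b⟩ := d
  induction k generalizing a b with
  | zero =>
    have ha : a = fun _ => 0 := funext fun i => by have := hd.1 i; simpa using this
    have hb : b = 0 := by have := hd.2; simp at this; omega
    subst ha hb
    rw [dc_zero]
  | succ k ih =>
    have hval : dvalid (k, (fun i => a i / 2), b / 4) := by
      constructor
      · intro i
        have := hd.1 i
        simp only at this ⊢
        rw [pow_succ] at this
        omega
      · have := hd.2
        simp only at this ⊢
        rw [pow_succ] at this
        omega
    refine Relation.ReflTransGen.tail (ih _ _ hval) ?_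
    refine ⟨fun i => ⟨a i % 2, by omega⟩, ⟨b % 4, by omega⟩, ?_⟩
    rw [dc_child]
    have h1 : (fun i => 2 * (a i / 2) + ((⟨a i % 2, by omega⟩ : Fin 2) : ℕ)) = a :=
      funext fun i => by simp only; omega
    have h2 : 4 * (b / 4) + ((⟨b % 4, by omega⟩ : Fin 4) : ℕ) = b := by simp only; omega
    rw [h1, h2]



lemma eh_strict_anti {Q : PCube n} (hQ : 0 < Q.h) {j k : ℕ} (h : j < k) : eh Q k < eh Q j := by
  unfold eh
  apply div_lt_div_of_pos_left hQ (by positivity)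
  exact pow_lt_pow_right₀ one_lt_two h

lemma ehsq_mul (Q : PCube n) (j k : ℕ) (h : j ≤ k) :
    eh Q j ^ 2 = 4 ^ (k - j) * eh Q k ^ 2 := by
  rw [eh_mul Q j k h, mul_pow, ← pow_mul]
  norm_num
  rw [show (k-j)*2 = 2*(k-j) by ring, pow_mul]
  norm_num

/-- Ancestor of a dyadic index at level `j`. -/
def anc (d : D n) (j : ℕ) : D n :=
  (j, fun i => d.2.1 i / 2 ^ (d.1 - j), d.2.2 / 4 ^ (d.1 - j))

lemma anc_self (d : D n) : anc d d.1 = d := by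
  obtain ⟨k, a, b⟩ := d
  simp [anc]

lemma anc_fst (d : D n) (j : ℕ) : (anc d j).1 = j := rfl

lemma anc_valid {d : D n} (hd : dvalid d) {j : ℕ} (hj : j ≤ d.1) : dvalid (anc d j) := by
  obtain ⟨k, a, b⟩ := d
  simp only [dvalid, anc] at *
  constructor
  · intro i
    have h1 := hd.1 i
    have h2 : (2:ℕ) ^ k = 2 ^ (k - j) * 2 ^ j := by rw [← pow_add]; congr 1; omega
    exact Nat.div_lt_of_lt_mul (by omega)
  · have h1 := hd.2
    have h2 : (4:ℕ) ^ k = 4 ^ (k - j) * 4 ^ j := by rw [← pow_add]; congr 1; omega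
    exact Nat.div_lt_of_lt_mul (by omega)

lemma anc_comp {d : D n} {j j' : ℕ} (h1 : j' ≤ j) (h2 : j ≤ d.1) :
    anc (anc d j) j' = anc d j' := by
  obtain ⟨k, a, b⟩ := d
  simp only [anc, Prod.mk.injEq]
  refine ⟨trivial, funext fun i => ?_, ?_⟩ <;>
    rw [Nat.div_div_eq_div_mul, ← pow_add] <;> congr 2 <;> omega

/-- 1D step for ancestor containment -/
lemma interval_sub {u H y : ℝ} (hH : 0 ≤ H) (c N : ℕ) (hN : 0 < N)
    (h1 : u + c * H < y) (h2 : y < u + (c + 1) * H) :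
    u + (c / N : ℕ) * ((N : ℝ) * H) < y ∧ y < u + ((c / N : ℕ) + 1) * ((N : ℝ) * H) := by
  have hq : ((c / N : ℕ) : ℝ) * N ≤ c := by exact_mod_cast Nat.div_mul_le_self c N
  have hc : (c : ℝ) + 1 ≤ ((c / N : ℕ) : ℝ) * N + N := by
    have h := Nat.div_add_mod c N
    have h2 := Nat.mod_lt c hN
    have h3 : ((N : ℕ) : ℝ) * ((c / N : ℕ) : ℝ) + ((c % N : ℕ) : ℝ) = (c : ℝ) := by
      exact_mod_cast h
    have h4 : ((c % N : ℕ) : ℝ) + 1 ≤ ((N : ℕ) : ℝ) := by exact_mod_cast h2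
    rw [mul_comm] at h3
    linarith
  constructor
  · nlinarith
  · nlinarith

lemma dc_subset_anc {Q : PCube n} (hQ : 0 < Q.h) (d : D n) {j : ℕ} (hj : j ≤ d.1) :
    (dc Q d).toSet ⊆ (dc Q (anc d j)).toSet := by
  obtain ⟨k, a, b⟩ := d
  intro p hp
  rw [mem_dc] at hp ⊢
  simp only [anc]
  have hsp : eh Q j = (((2:ℕ) ^ (k - j) : ℕ) : ℝ) * eh Q k := by
    push_cast; exact eh_mul Q j k hj
  have htm : eh Q j ^ 2 = (((4:ℕ) ^ (k - j) : ℕ) : ℝ) * eh Q k ^ 2 := by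
    push_cast; exact ehsq_mul Q j k hj
  refine ⟨fun i => ?_, ?_⟩
  · rw [hsp]
    exact interval_sub (le_of_lt (eh_pos hQ k)) (a i) (2 ^ (k - j)) (by positivity)
      (hp.1 i).1 (hp.1 i).2
  · rw [htm]
    exact interval_sub (by positivity) b (4 ^ (k - j)) (by positivity) hp.2.1 hp.2.2

/-- Distinct same-level dyadic cubes are disjoint. -/
lemma dc_disj_same {Q : PCube n} (hQ : 0 < Q.h) {k : ℕ} {a c : Fin n → ℕ} {b e : ℕ}
    (hne : ((k, a, b) : D n) ≠ (k, c, e)) :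
    Disjoint (dc Q (k, a, b)).toSet (dc Q (k, c, e)).toSet := by
  rw [Set.disjoint_left]
  intro p hp hp'
  rw [mem_dc] at hp hp'
  have key : ∀ (c1 c2 : ℕ) (u H y : ℝ), 0 < H → u + c1 * H < y → y < u + (c1 + 1) * H →
      u + c2 * H < y → y < u + (c2 + 1) * H → c1 = c2 := by
    intro c1 c2 u H y hH l1 r1 l2 r2
    by_contra hne2
    rcases Nat.lt_or_ge c1 c2 with h | h
    · have : (c1 + 1 : ℝ) ≤ (c2 : ℝ) := by exact_mod_cast h
      nlinarith
    · have hlt : c2 < c1 := by omega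
      have : (c2 + 1 : ℝ) ≤ (c1 : ℝ) := by exact_mod_cast hlt
      nlinarith
  have ha : a = c := funext fun i =>
    key _ _ _ _ _ (eh_pos hQ k) (hp.1 i).1 (hp.1 i).2 (hp'.1 i).1 (hp'.1 i).2
  have hb : b = e :=
    key _ _ _ _ _ (by have := eh_pos hQ k; positivity) hp.2.1 hp.2.2 hp'.2.1 hp'.2.2
  exact hne (by rw [ha, hb])

lemma dc_nonempty {Q : PCube n} (hQ : 0 < Q.h) (d : D n) : (dc Q d).toSet.Nonempty := by
  refine ⟨(fun i => Q.x i + d.2.1 i * eh Q d.1 + eh Q d.1 / 2,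
    Q.t + d.2.2 * eh Q d.1 ^ 2 + eh Q d.1 ^ 2 / 2), ?_⟩
  rw [mem_dc]
  have h1 := eh_pos hQ d.1
  have h2 : (0:ℝ) < eh Q d.1 ^ 2 := by positivity
  exact ⟨fun i => ⟨by linarith, by nlinarith⟩, ⟨by linarith, by nlinarith⟩⟩

/-- If two dyadic cubes are not disjoint then the deeper one is contained in the
shallower one, which is its ancestor. -/
lemma anc_eq_of_not_disj {Q : PCube n} (hQ : 0 < Q.h) {d d' : D n} (hk : d.1 ≤ d'.1)
    (hnd : ¬ Disjoint (dc Q d).toSet (dc Q d').toSet) : anc d' d.1 = d := by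
  by_contra hne
  apply hnd
  refine Disjoint.mono_right (dc_subset_anc hQ d' hk) ?_
  have he : anc d' d.1 = (d.1, (anc d' d.1).2.1, (anc d' d.1).2.2) := rfl
  obtain ⟨k, a, b⟩ := d
  rw [he]
  exact dc_disj_same hQ (fun hEq => hne (by rw [he, ← hEq]))


lemma dc_disj_same' {Q : PCube n} (hQ : 0 < Q.h) {d d' : D n} (h1 : d.1 = d'.1)
    (hne : d ≠ d') : Disjoint (dc Q d).toSet (dc Q d').toSet := by
  obtain ⟨k, a, b⟩ := d
  obtain ⟨k', c, e⟩ := d'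
  simp only at h1
  subst h1
  exact dc_disj_same hQ hne

lemma level_le_of_subset {Q : PCube n} (hQ : 0 < Q.h) {d d' : D n}
    (hsub : (dc Q d).toSet ⊆ (dc Q d').toSet) : d'.1 ≤ d.1 := by
  by_contra hlt
  push_neg at hlt
  have h1 := eh_pos hQ d.1
  have h2 := eh_pos hQ d'.1
  have hstr : eh Q d'.1 ≤ eh Q d.1 / 2 := by
    rw [← eh_succ]
    exact eh_anti hQ hlt
  -- time interval inclusion
  obtain ⟨p, hp⟩ := dc_nonempty hQ (Q := Q) d
  have htime : ∀ τ : ℝ, Q.t + d.2.2 * eh Q d.1 ^ 2 < τ → τ < Q.t + (d.2.2 + 1) * eh Q d.1 ^ 2 →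
      Q.t + d'.2.2 * eh Q d'.1 ^ 2 < τ ∧ τ < Q.t + (d'.2.2 + 1) * eh Q d'.1 ^ 2 := by
    intro τ hτ1 hτ2
    have hmem : (p.1, τ) ∈ (dc Q d).toSet := by
      rw [mem_dc] at hp ⊢
      exact ⟨hp.1, hτ1, hτ2⟩
    have := hsub hmem
    rw [mem_dc] at this
    exact this.2
  set T := Q.t + d.2.2 * eh Q d.1 ^ 2 with hT
  have k1 := htime (T + eh Q d.1 ^ 2 / 4) (by nlinarith) (by nlinarith)
  have k2 := htime (T + eh Q d.1 ^ 2 * 3 / 4) (by nlinarith) (by nlinarith)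
  have hsq : eh Q d'.1 ^ 2 ≤ eh Q d.1 ^ 2 / 4 := by nlinarith
  nlinarith [k1.1, k2.2]

lemma subset_of_not_disj {Q : PCube n} (hQ : 0 < Q.h) {d d' : D n} (hk : d.1 ≤ d'.1)
    (hnd : ¬ Disjoint (dc Q d).toSet (dc Q d').toSet) :
    (dc Q d').toSet ⊆ (dc Q d).toSet := by
  have h := anc_eq_of_not_disj hQ hk hnd
  have := dc_subset_anc hQ d' hk
  rwa [h] at this

lemma eq_of_subset_level_eq {Q : PCube n} (hQ : 0 < Q.h) {d d' : D n} (h1 : d.1 = d'.1)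
    (hsub : (dc Q d).toSet ⊆ (dc Q d').toSet) : d = d' := by
  by_contra hne
  have hdisj := dc_disj_same' hQ h1 hne
  obtain ⟨p, hp⟩ := dc_nonempty hQ (Q := Q) d
  exact (Set.disjoint_left.mp hdisj hp) (hsub hp)

lemma disj_of_antichain {Q : PCube n} (hQ : 0 < Q.h) {S : Set (D n)}
    (hS : ∀ d ∈ S, ∀ d' ∈ S, (dc Q d).toSet ⊆ (dc Q d').toSet → d = d') :
    ∀ d ∈ S, ∀ d' ∈ S, d ≠ d' → Disjoint (dc Q d).toSet (dc Q d').toSet := by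
  have key : ∀ d ∈ S, ∀ d' ∈ S, d ≠ d' → d.1 ≤ d'.1 →
      Disjoint (dc Q d).toSet (dc Q d').toSet := by
    intro d hd d' hd' hne hk
    by_contra hnd
    exact hne (hS d' hd' d hd (subset_of_not_disj hQ hk hnd)).symm
  intro d hd d' hd' hne
  rcases le_total d.1 d'.1 with h | h
  · exact key d hd d' hd' hne h
  · exact (key d' hd' d hd hne.symm h).symm



lemma toSet_eq (K : PCube n) :
    K.toSet = (Set.univ.pi fun i => Set.Ioo (K.x i) (K.x i + K.h)) ×ˢ
      Set.Ioo K.t (K.t + K.h ^ 2) := by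
  ext p; simp [PCube.toSet, Set.mem_pi]

lemma stack_eq (K : PCube n) (m : ℕ) :
    K.stack m = (Set.univ.pi fun i => Set.Ioo (K.x i) (K.x i + K.h)) ×ˢ
      Set.Ioo (K.t + K.h ^ 2) (K.t + K.h ^ 2 + (m : ℝ) * K.h ^ 2) := by
  ext p; simp [PCube.stack, Set.mem_pi]

lemma measurable_toSet (K : PCube n) : MeasurableSet K.toSet := by
  rw [toSet_eq]
  exact (MeasurableSet.univ_pi fun i => measurableSet_Ioo).prod measurableSet_Ioo

lemma measurable_stack (K : PCube n) (m : ℕ) : MeasurableSet (K.stack m) := by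
  rw [stack_eq]
  exact (MeasurableSet.univ_pi fun i => measurableSet_Ioo).prod measurableSet_Ioo

lemma vol_toSet (K : PCube n) (hK : 0 ≤ K.h) :
    volume K.toSet = ENNReal.ofReal (K.h ^ (n + 2)) := by
  rw [toSet_eq, Measure.volume_eq_prod, Measure.prod_prod, volume_pi_pi]
  simp only [Real.volume_Ioo, add_sub_cancel_left]
  rw [Finset.prod_const, ← ENNReal.ofReal_pow hK, ← ENNReal.ofReal_mul (by positivity)]
  congr 1
  rw [Finset.card_univ, Fintype.card_fin]
  ring

lemma vol_stack (K : PCube n) (hK : 0 ≤ K.h) (m : ℕ) :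
    volume (K.stack m) = (m : ℝ≥0∞) * ENNReal.ofReal (K.h ^ (n + 2)) := by
  rw [stack_eq, Measure.volume_eq_prod, Measure.prod_prod, volume_pi_pi]
  simp only [Real.volume_Ioo, add_sub_cancel_left]
  rw [Finset.prod_const, ← ENNReal.ofReal_pow hK, Finset.card_univ, Fintype.card_fin,
    ENNReal.ofReal_mul (by positivity : (0:ℝ) ≤ (m:ℝ)), ENNReal.ofReal_natCast]
  rw [← mul_assoc, mul_comm (ENNReal.ofReal (K.h ^ n)) ((m:ℝ≥0∞)), mul_assoc,
    ← ENNReal.ofReal_mul (by positivity)]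
  congr 2
  ring



lemma hyperplane_null_fst (i : Fin n) (c : ℝ) : volume {p : Ω n | p.1 i = c} = 0 := by
  have he : {p : Ω n | p.1 i = c} = ({f : Fin n → ℝ | f i = c}) ×ˢ (Set.univ : Set ℝ) := by
    ext p; simp [Set.mem_prod]
  rw [he, Measure.volume_eq_prod, Measure.prod_prod]
  have h2 : {f : Fin n → ℝ | f i = c} =
      Set.pi Set.univ (Function.update (fun _ => (Set.univ : Set ℝ)) i {c}) := by
    ext f
    simp only [Set.mem_setOf_eq, Set.mem_pi, Set.mem_univ, forall_true_left]
    constructor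
    · intro hf j
      rcases eq_or_ne j i with rfl | hne
      · simp [Function.update, hf]
      · simp [Function.update, hne]
    · intro hf
      have := hf i
      simpa [Function.update] using this
  rw [h2, volume_pi_pi]
  rw [Finset.prod_eq_zero (Finset.mem_univ i) (by simp [Function.update])]
  simp

lemma hyperplane_null_snd (c : ℝ) : volume {p : Ω n | p.2 = c} = 0 := by
  have he : {p : Ω n | p.2 = c} = (Set.univ : Set (Fin n → ℝ)) ×ˢ ({c} : Set ℝ) := by
    ext ⟨a, b⟩; simp [eq_comm]
  rw [he, Measure.volume_eq_prod, Measure.prod_prod]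
  simp

/-- The set of "grid" points, a null set. -/
def grid (Q : PCube n) : Set (Ω n) :=
  (⋃ (i : Fin n) (k : ℕ) (c : ℕ), {p : Ω n | p.1 i = Q.x i + c * eh Q k}) ∪
    ⋃ (k : ℕ) (c : ℕ), {p : Ω n | p.2 = Q.t + c * eh Q k ^ 2}

lemma grid_null (Q : PCube n) : volume (grid Q) = 0 := by
  refine measure_union_null ?_ ?_
  · exact measure_iUnion_null fun i => measure_iUnion_null fun k => measure_iUnion_null
      fun c => hyperplane_null_fst i _
  · exact measure_iUnion_null fun k => measure_iUnion_null fun c => hyperplane_null_snd _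

/-- The dyadic cube of level `k` containing a (generic) point `p`. -/
noncomputable def loc (Q : PCube n) (p : Ω n) (k : ℕ) : D n :=
  (k, fun i => ⌊(p.1 i - Q.x i) / eh Q k⌋₊, ⌊(p.2 - Q.t) / eh Q k ^ 2⌋₊)

lemma eh_zero (Q : PCube n) : eh Q 0 = Q.h := by simp [eh]

lemma loc_spec {Q : PCube n} (hQ : 0 < Q.h) {p : Ω n} (hp : p ∈ Q.toSet)
    (hg : p ∉ grid Q) (k : ℕ) :
    p ∈ (dc Q (loc Q p k)).toSet ∧ dvalid (loc Q p k) := by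
  have hek := eh_pos hQ k
  have heksq : (0:ℝ) < eh Q k ^ 2 := by positivity
  have hsp : ∀ i, ((⌊(p.1 i - Q.x i) / eh Q k⌋₊ : ℝ) < (p.1 i - Q.x i) / eh Q k ∧
      (p.1 i - Q.x i) / eh Q k < ⌊(p.1 i - Q.x i) / eh Q k⌋₊ + 1 ∧
      ⌊(p.1 i - Q.x i) / eh Q k⌋₊ < 2 ^ k) := by
    intro i
    set y := (p.1 i - Q.x i) / eh Q k with hy
    have hy0 : 0 < y := by
      have := (hp.1 i).1
      apply div_pos (by linarith) hek
    have hy2 : y < 2 ^ k := by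
      have h1 := (hp.1 i).2
      rw [div_lt_iff₀ hek]
      have : (2:ℝ) ^ k * eh Q k = Q.h := by
        have := eh_mul Q 0 k (Nat.zero_le k)
        rw [eh_zero] at this
        simpa using this.symm
      rw [this]
      linarith
    have hne : (⌊y⌋₊ : ℝ) ≠ y := by
      intro hEq
      apply hg
      left
      refine Set.mem_iUnion.mpr ⟨i, Set.mem_iUnion.mpr ⟨k, Set.mem_iUnion.mpr ⟨⌊y⌋₊, ?_⟩⟩⟩
      simp only [Set.mem_setOf_eq]
      have : y * eh Q k = p.1 i - Q.x i := div_mul_cancel₀ _ hek.ne'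
      rw [← hEq] at this
      linarith
    refine ⟨lt_of_le_of_ne (Nat.floor_le hy0.le) hne, Nat.lt_floor_add_one y, ?_⟩
    refine (Nat.floor_lt hy0.le).mpr ?_
    push_cast
    exact hy2
  have htm : ((⌊(p.2 - Q.t) / eh Q k ^ 2⌋₊ : ℝ) < (p.2 - Q.t) / eh Q k ^ 2 ∧
      (p.2 - Q.t) / eh Q k ^ 2 < ⌊(p.2 - Q.t) / eh Q k ^ 2⌋₊ + 1 ∧
      ⌊(p.2 - Q.t) / eh Q k ^ 2⌋₊ < 4 ^ k) := by
    set y := (p.2 - Q.t) / eh Q k ^ 2 with hy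
    have hy0 : 0 < y := by
      have := hp.2.1
      apply div_pos (by linarith) heksq
    have hy2 : y < 4 ^ k := by
      have h1 := hp.2.2
      rw [div_lt_iff₀ heksq]
      have : (4:ℝ) ^ k * eh Q k ^ 2 = Q.h ^ 2 := by
        have := ehsq_mul Q 0 k (Nat.zero_le k)
        rw [eh_zero] at this
        simpa using this.symm
      rw [this]
      linarith
    have hne : (⌊y⌋₊ : ℝ) ≠ y := by
      intro hEq
      apply hg
      right
      refine Set.mem_iUnion.mpr ⟨k, Set.mem_iUnion.mpr ⟨⌊y⌋₊, ?_⟩⟩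
      simp only [Set.mem_setOf_eq]
      have : y * eh Q k ^ 2 = p.2 - Q.t := div_mul_cancel₀ _ heksq.ne'
      rw [← hEq] at this
      linarith
    refine ⟨lt_of_le_of_ne (Nat.floor_le hy0.le) hne, Nat.lt_floor_add_one y, ?_⟩
    refine (Nat.floor_lt hy0.le).mpr ?_
    push_cast
    exact hy2
  constructor
  · rw [mem_dc]
    constructor
    · intro i
      obtain ⟨h1, h2, _⟩ := hsp i
      constructor
      · have := (mul_lt_mul_of_pos_right h1 hek)
        rw [div_mul_cancel₀ _ hek.ne'] at this
        simp only [loc]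
        linarith
      · have := (mul_lt_mul_of_pos_right h2 hek)
        rw [div_mul_cancel₀ _ hek.ne'] at this
        simp only [loc]
        linarith
    · obtain ⟨h1, h2, _⟩ := htm
      constructor
      · have := (mul_lt_mul_of_pos_right h1 heksq)
        rw [div_mul_cancel₀ _ heksq.ne'] at this
        simp only [loc]
        linarith
      · have := (mul_lt_mul_of_pos_right h2 heksq)
        rw [div_mul_cancel₀ _ heksq.ne'] at this
        simp only [loc]
        linarith
  · exact ⟨fun i => (hsp i).2.2, htm.2.2⟩

lemma loc_anc {Q : PCube n} (hQ : 0 < Q.h) {p : Ω n} (hp : p ∈ Q.toSet)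
    {j k : ℕ} (hj : j ≤ k) : anc (loc Q p k) j = loc Q p j := by
  have hek := eh_pos hQ k
  simp only [anc, loc, Prod.mk.injEq]
  refine ⟨trivial, funext fun i => ?_, ?_⟩
  · have harg : (p.1 i - Q.x i) / eh Q j =
        ((p.1 i - Q.x i) / eh Q k) / (((2:ℕ) ^ (k - j) : ℕ) : ℝ) := by
      rw [eh_mul Q j k hj, div_div]
      push_cast
      rw [mul_comm]
    rw [harg, Nat.floor_div_natCast]
  · have harg : (p.2 - Q.t) / eh Q j ^ 2 =
        ((p.2 - Q.t) / eh Q k ^ 2) / (((4:ℕ) ^ (k - j) : ℕ) : ℝ) := by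
      rw [ehsq_mul Q j k hj, div_div]
      push_cast
      rw [mul_comm]
    rw [harg, Nat.floor_div_natCast]


lemma exists_cube_subset {Q : PCube n} (hQ : 0 < Q.h) {p : Ω n} (hp : p ∈ Q.toSet)
    (hg : p ∉ grid Q) {U : Set (Ω n)} (hU : IsOpen U) (hpU : p ∈ U) :
    ∃ k, (dc Q (loc Q p k)).toSet ⊆ U := by
  obtain ⟨ε, hε, hball⟩ := Metric.isOpen_iff.mp hU p hpU
  set ε' := min ε 1 with hε'def
  have hε' : 0 < ε' := lt_min hε one_pos
  obtain ⟨k, hk⟩ : ∃ k : ℕ, Q.h / ε' < 2 ^ k := pow_unbounded_of_one_lt _ one_lt_two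
  have hehk : eh Q k < ε' := by
    rw [eh, div_lt_iff₀ (by positivity : (0:ℝ) < (2:ℝ)^k)]
    rw [div_lt_iff₀ hε'] at hk
    linarith [hk]
  have heε : eh Q k < ε := lt_of_lt_of_le hehk (min_le_left _ _)
  have he1 : eh Q k < 1 := lt_of_lt_of_le hehk (min_le_right _ _)
  have hek := eh_pos hQ k
  refine ⟨k, fun q hq => hball ?_⟩
  have hpk := (loc_spec hQ hp hg k).1
  rw [Metric.mem_ball, Prod.dist_eq]
  rw [mem_dc] at hq hpk
  simp only [show (loc Q p k).1 = k from rfl] at hq hpk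
  apply max_lt
  · refine (dist_pi_lt_iff hε).mpr fun i => ?_
    rw [Real.dist_eq, abs_sub_lt_iff]
    have h1 := hq.1 i
    have h2 := hpk.1 i
    constructor <;> linarith
  · rw [Real.dist_eq, abs_sub_lt_iff]
    have h1 := hq.2
    have h2 := hpk.2
    have hsq : eh Q k ^ 2 < ε := by nlinarith
    constructor <;> linarith

lemma thin_null {Q : PCube n} (hQ : 0 < Q.h) {A' : Set (Ω n)} (hAm : MeasurableSet A')
    (hAQ : A' ⊆ Q.toSet) {δ : ℝ} (hδ1 : δ < 1)
    (hthin : ∀ d : D n, dvalid d →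
      volume ((dc Q d).toSet ∩ A') ≤ ENNReal.ofReal δ * volume (dc Q d).toSet) :
    volume A' = 0 := by
  set δ' := ENNReal.ofReal δ with hδ'def
  have hδ'1 : δ' < 1 := by rw [hδ'def]; exact ENNReal.ofReal_lt_one.mpr hδ1
  have hfin : volume A' < ⊤ := lt_of_le_of_lt (measure_mono hAQ)
    (by rw [vol_toSet Q hQ.le]; exact ENNReal.ofReal_lt_top)
  have key : ∀ ε : ℝ≥0, 0 < ε → volume A' ≤ δ' * volume A' + ε := by
    intro ε hε
    obtain ⟨U, hUsub, hUopen, hUvol⟩ := Set.exists_isOpen_lt_of_lt A' (volume A' + ε)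
      (ENNReal.lt_add_right hfin.ne (by exact_mod_cast hε.ne'))
    set M : Set (D n) := {d | dvalid d ∧ (dc Q d).toSet ⊆ U ∧
      (d.1 = 0 ∨ ¬ (dc Q (anc d (d.1 - 1))).toSet ⊆ U)} with hM
    have hanti : ∀ d ∈ M, ∀ d' ∈ M, (dc Q d).toSet ⊆ (dc Q d').toSet → d = d' := by
      intro d hd d' hd' hsub
      have hlev : d'.1 ≤ d.1 := level_le_of_subset hQ hsub
      rcases eq_or_lt_of_le hlev with hEq | hlt
      · exact eq_of_subset_level_eq hQ hEq.symm hsub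
      · exfalso
        have hd1 : d.1 ≠ 0 := by omega
        have hpar : ¬ (dc Q (anc d (d.1 - 1))).toSet ⊆ U := by
          rcases hd.2.2 with h | h
          · exact absurd h hd1
          · exact h
        apply hpar
        have hnd : ¬ Disjoint (dc Q d').toSet (dc Q d).toSet := by
          obtain ⟨q, hq⟩ := dc_nonempty hQ (Q := Q) d
          exact Set.not_disjoint_iff.mpr ⟨q, hsub hq, hq⟩
        have hanc : anc d d'.1 = d' := anc_eq_of_not_disj hQ (le_of_lt hlt) hnd
        calc (dc Q (anc d (d.1 - 1))).toSet
            ⊆ (dc Q (anc (anc d (d.1 - 1)) d'.1)).toSet :=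
              dc_subset_anc hQ _ (show d'.1 ≤ d.1 - 1 by omega)
          _ = (dc Q (anc d d'.1)).toSet := by rw [anc_comp (by omega) (by omega)]
          _ = (dc Q d').toSet := by rw [hanc]
          _ ⊆ U := hd'.2.1
    have hdisj := disj_of_antichain hQ hanti
    have hMc : M.Countable := M.to_countable
    have hcover : A' \ grid Q ⊆ ⋃ d ∈ M, ((dc Q d).toSet ∩ A') := by
      rintro p ⟨hpA, hpg⟩
      have hpQ := hAQ hpA
      haveI : DecidablePred fun k => (dc Q (loc Q p k)).toSet ⊆ U := fun _ => Classical.dec _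
      have hex : ∃ k, (dc Q (loc Q p k)).toSet ⊆ U :=
        exists_cube_subset hQ hpQ hpg hUopen (hUsub hpA)
      set k0 := Nat.find hex with hk0def
      have hk0 : (dc Q (loc Q p k0)).toSet ⊆ U := Nat.find_spec hex
      have hmem : loc Q p k0 ∈ M := by
        refine ⟨(loc_spec hQ hpQ hpg k0).2, hk0, ?_⟩
        rcases Nat.eq_zero_or_pos k0 with h0 | hpos
        · left; exact h0
        · right
          have hh : anc (loc Q p k0) (k0 - 1) = loc Q p (k0 - 1) :=
            loc_anc hQ hpQ (by omega)
          rw [show (loc Q p k0).1 = k0 from rfl, hh]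
          exact Nat.find_min hex (by omega)
      exact Set.mem_biUnion hmem ⟨(loc_spec hQ hpQ hpg k0).1, hpA⟩
    calc volume A' = volume (A' \ grid Q) := (measure_diff_null (grid_null Q)).symm
      _ ≤ volume (⋃ d ∈ M, ((dc Q d).toSet ∩ A')) := measure_mono hcover
      _ ≤ ∑' d : M, volume ((dc Q d.1).toSet ∩ A') := measure_biUnion_le volume hMc _
      _ ≤ ∑' d : M, δ' * volume (dc Q d.1).toSet :=
          ENNReal.tsum_le_tsum fun d => hthin d.1 d.2.1
      _ = δ' * ∑' d : M, volume (dc Q d.1).toSet := ENNReal.tsum_mul_left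
      _ = δ' * volume (⋃ d ∈ M, (dc Q d).toSet) := by
          rw [measure_biUnion hMc (fun d hd d' hd' hne => hdisj d hd d' hd' hne)
            (fun d _ => measurable_toSet _)]
      _ ≤ δ' * volume U := mul_le_mul_right
          (measure_mono (Set.iUnion₂_subset fun d hd => hd.2.1)) δ'
      _ ≤ δ' * (volume A' + ε) := mul_le_mul_right hUvol.le _
      _ = δ' * volume A' + δ' * ε := by rw [mul_add]
      _ ≤ δ' * volume A' + ε := by
          refine add_le_add le_rfl ?_
          calc δ' * ε ≤ 1 * ε := mul_le_mul_left hδ'1.le _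
            _ = ε := one_mul _
  have hle : volume A' ≤ δ' * volume A' :=
    ENNReal.le_of_forall_pos_le_add fun ε hε _ => key ε hε
  by_contra h0
  have : δ' * volume A' < 1 * volume A' :=
    ENNReal.mul_lt_mul_left h0 hfin.ne hδ'1
  rw [one_mul] at this
  exact absurd hle (not_le.mpr this)



/-- 1-D stacking lemma: for a disjoint family of open intervals `I j = (t j, t j + ℓ j)`
with stacks `S j = (t j + ℓ j, t j + ℓ j + m ℓ j)`, the total measure of the parts of the
intervals not covered by the union `S` of the stacks is at most `|S| / m`. -/
lemma oneD {ι : Type*} [Countable ι] (m : ℕ) (hm : 1 ≤ m) (t ℓ : ι → ℝ)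
    (hd : Pairwise fun i j => Disjoint (Set.Ioo (t i) (t i + ℓ i)) (Set.Ioo (t j) (t j + ℓ j))) :
    ∑' j, volume (Set.Ioo (t j) (t j + ℓ j) \
        (⋃ i, Set.Ioo (t i + ℓ i) (t i + ℓ i + m * ℓ i)))
      ≤ (m : ℝ≥0∞)⁻¹ *
        volume (⋃ i, Set.Ioo (t i + ℓ i) (t i + ℓ i + m * ℓ i)) := by
  classical
  set S : Set ℝ := ⋃ i, Set.Ioo (t i + ℓ i) (t i + ℓ i + m * ℓ i) with hS
  set E : ι → Set ℝ := fun j => Set.Ioo (t j) (t j + ℓ j) \ S with hE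
  set G : Set ι := {j | (E j).Nonempty} with hG
  have hℓpos : ∀ j ∈ G, 0 < ℓ j := by
    rintro j ⟨y, hy⟩
    have := hy.1
    simp only [Set.mem_Ioo] at this
    linarith [this.1, this.2]
  -- key claim : stacks of members of G are pairwise disjoint
  have key : ∀ j ∈ G, ∀ j' ∈ G, j ≠ j' →
      Disjoint (Set.Ioo (t j + ℓ j) (t j + ℓ j + m * ℓ j))
        (Set.Ioo (t j' + ℓ j') (t j' + ℓ j' + m * ℓ j')) := by
    -- first do it assuming the tops are ordered
    have half : ∀ j ∈ G, ∀ j' ∈ G, j ≠ j' → t j + ℓ j ≤ t j' + ℓ j' →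
        Disjoint (Set.Ioo (t j + ℓ j) (t j + ℓ j + m * ℓ j))
          (Set.Ioo (t j' + ℓ j') (t j' + ℓ j' + m * ℓ j')) := by
      intro j hj j' hj' hne hord
      by_contra hnd
      obtain ⟨s, hs1, hs2⟩ := Set.not_disjoint_iff.mp hnd
      simp only [Set.mem_Ioo] at hs1 hs2
      have hℓj := hℓpos j hj
      have hℓj' := hℓpos j' hj'
      have hIdisj := hd hne
      -- tops distinct
      have htne : t j + ℓ j ≠ t j' + ℓ j' := by
        intro hEq
        have : max (t j) (t j') < t j + ℓ j := by
          rcases max_cases (t j) (t j') with ⟨h1, _⟩ | ⟨h1, _⟩ <;> rw [h1] <;> linarith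
        set w := (max (t j) (t j') + (t j + ℓ j)) / 2 with hw
        have hw1 : w ∈ Set.Ioo (t j) (t j + ℓ j) := by
          constructor
          · have := le_max_left (t j) (t j'); simp only [hw]; linarith
          · simp only [hw]; linarith
        have hw2 : w ∈ Set.Ioo (t j') (t j' + ℓ j') := by
          constructor
          · have := le_max_right (t j) (t j'); simp only [hw]; linarith
          · simp only [hw]; rw [← hEq]; linarith
        exact Set.disjoint_left.mp hIdisj hw1 hw2
      have htop : t j + ℓ j < t j' + ℓ j' := lt_of_le_of_ne hord htne
      rcases lt_or_ge (t j') (t j + ℓ j) with hlow | hlow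
      · -- bases overlap: contradiction
        have : max (t j) (t j') < t j + ℓ j := by
          rcases max_cases (t j) (t j') with ⟨h1, _⟩ | ⟨h1, _⟩ <;> rw [h1] <;> linarith
        set w := (max (t j) (t j') + (t j + ℓ j)) / 2 with hw
        have hw1 : w ∈ Set.Ioo (t j) (t j + ℓ j) := by
          constructor
          · have := le_max_left (t j) (t j'); simp only [hw]; linarith
          · simp only [hw]; linarith
        have hw2 : w ∈ Set.Ioo (t j') (t j' + ℓ j') := by
          constructor
          · have := le_max_right (t j) (t j'); simp only [hw]; linarith
          · simp only [hw]; linarith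
        exact Set.disjoint_left.mp hIdisj hw1 hw2
      · -- I j' is contained in the stack of j, so E j' is empty
        obtain ⟨y, hy⟩ := hj'
        apply hy.2
        rw [hS]
        refine Set.mem_iUnion.mpr ⟨j, ?_⟩
        have hy1 := hy.1
        simp only [Set.mem_Ioo] at hy1
        constructor
        · linarith [hy1.1]
        · linarith [hy1.2, hs2.1, hs1.2]
    intro j hj j' hj' hne
    rcases le_total (t j + ℓ j) (t j' + ℓ j') with h | h
    · exact half j hj j' hj' hne h
    · exact (half j' hj' j hj hne.symm h).symm
  -- now sum up
  have hsupp : Function.support (fun j => volume (E j)) ⊆ G := by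
    intro j hj
    rcases Set.eq_empty_or_nonempty (E j) with h | h
    · simp [h] at hj
    · exact h
  rw [← tsum_subtype_eq_of_support_subset hsupp]
  have hle1 : ∑' j : G, volume (E j.1) ≤ ∑' j : G, volume (Set.Ioo (t j.1) (t j.1 + ℓ j.1)) :=
    ENNReal.tsum_le_tsum fun j => measure_mono Set.diff_subset
  have hvol : ∀ j : G, volume (Set.Ioo (t j.1) (t j.1 + ℓ j.1)) =
      (m : ℝ≥0∞)⁻¹ * volume (Set.Ioo (t j.1 + ℓ j.1) (t j.1 + ℓ j.1 + m * ℓ j.1)) := by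
    rintro ⟨j, hj⟩
    have hℓj := hℓpos j hj
    rw [Real.volume_Ioo, Real.volume_Ioo]
    have h1 : t j + ℓ j - t j = ℓ j := by ring
    have h2 : t j + ℓ j + m * ℓ j - (t j + ℓ j) = m * ℓ j := by ring
    rw [h1, h2, ENNReal.ofReal_mul (by positivity), ENNReal.ofReal_natCast, ← mul_assoc,
      ENNReal.inv_mul_cancel (by exact_mod_cast (by omega : m ≠ 0)) (by simp), one_mul]
  calc ∑' j : G, volume (E j.1)
      ≤ ∑' j : G, volume (Set.Ioo (t j.1) (t j.1 + ℓ j.1)) := hle1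
    _ = ∑' j : G, (m : ℝ≥0∞)⁻¹ * volume (Set.Ioo (t j.1 + ℓ j.1) (t j.1 + ℓ j.1 + m * ℓ j.1)) :=
        tsum_congr hvol
    _ = (m : ℝ≥0∞)⁻¹ * ∑' j : G, volume (Set.Ioo (t j.1 + ℓ j.1) (t j.1 + ℓ j.1 + m * ℓ j.1)) :=
        ENNReal.tsum_mul_left
    _ = (m : ℝ≥0∞)⁻¹ * volume (⋃ j : G, Set.Ioo (t j.1 + ℓ j.1) (t j.1 + ℓ j.1 + m * ℓ j.1)) := by
        rw [measure_iUnion (fun j j' hne => key j.1 j.2 j'.1 j'.2 (fun h => hne (Subtype.ext h)))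
          (fun j => measurableSet_Ioo)]
    _ ≤ (m : ℝ≥0∞)⁻¹ * volume S := by
        refine mul_le_mul_right (measure_mono (Set.iUnion_subset fun j => ?_)) _
        rw [hS]
        exact Set.subset_iUnion (fun i => Set.Ioo (t i + ℓ i) (t i + ℓ i + (m:ℝ) * ℓ i)) j.1



lemma slice_toSet (K : PCube n) (x : Fin n → ℝ) :
    Prod.mk x ⁻¹' K.toSet =
      if (∀ i, x i ∈ Set.Ioo (K.x i) (K.x i + K.h)) then Set.Ioo K.t (K.t + K.h ^ 2)
      else ∅ := by
  ext τ
  simp only [Set.mem_preimage, PCube.toSet, Set.mem_setOf_eq]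
  by_cases h : ∀ i, x i ∈ Set.Ioo (K.x i) (K.x i + K.h)
  · rw [if_pos h]
    exact ⟨fun hh => hh.2, fun hh => ⟨h, hh⟩⟩
  · rw [if_neg h]
    simp only [Set.mem_empty_iff_false, iff_false, not_and]
    intro hh
    exact (h hh).elim

lemma slice_stack (K : PCube n) (m : ℕ) (x : Fin n → ℝ) :
    Prod.mk x ⁻¹' K.stack m =
      if (∀ i, x i ∈ Set.Ioo (K.x i) (K.x i + K.h)) then
        Set.Ioo (K.t + K.h ^ 2) (K.t + K.h ^ 2 + (m : ℝ) * K.h ^ 2)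
      else ∅ := by
  ext τ
  simp only [Set.mem_preimage, PCube.stack, Set.mem_setOf_eq]
  by_cases h : ∀ i, x i ∈ Set.Ioo (K.x i) (K.x i + K.h)
  · rw [if_pos h]
    exact ⟨fun hh => hh.2, fun hh => ⟨h, hh⟩⟩
  · rw [if_neg h]
    simp only [Set.mem_empty_iff_false, iff_false, not_and]
    intro hh
    exact (h hh).elim

/-- The stacking estimate: for a pairwise disjoint countable family of parabolic cubes,
the total volume is controlled by `(m+1)/m` times the volume of the union of the stacks. -/
lemma stack_bound {Q : PCube n} (m : ℕ) (hm : 1 ≤ m) {S : Set (D n)}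
    (hdisj : ∀ d ∈ S, ∀ d' ∈ S, d ≠ d' → Disjoint (dc Q d).toSet (dc Q d').toSet) :
    ∑' d : S, volume (dc Q d.1).toSet ≤
      ((m : ℝ≥0∞) + 1) / m * volume (⋃ d : S, (dc Q d.1).stack m) := by
  classical
  set U : Set (Ω n) := ⋃ d : S, (dc Q d.1).stack m with hU
  have hUm : MeasurableSet U := MeasurableSet.iUnion fun d => measurable_stack _ m
  have hmne : (m : ℝ≥0∞) ≠ 0 := by exact_mod_cast (by omega : m ≠ 0)
  have hmnt : (m : ℝ≥0∞) ≠ ⊤ := ENNReal.natCast_ne_top m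
  -- part 1 : the parts inside U
  have h1 : ∑' d : S, volume ((dc Q d.1).toSet ∩ U) ≤ volume U := by
    rw [← measure_iUnion (fun d d' hne => ?_) (fun d => (measurable_toSet _).inter hUm)]
    · exact measure_mono (Set.iUnion_subset fun d => Set.inter_subset_right)
    · exact Disjoint.mono Set.inter_subset_left Set.inter_subset_left
        (hdisj d.1 d.2 d'.1 d'.2 (fun h => hne (Subtype.ext h)))
  -- part 2 : the parts outside U, via Fubini and the 1-D lemma
  have h2 : ∑' d : S, volume ((dc Q d.1).toSet \ U) ≤ (m : ℝ≥0∞)⁻¹ * volume U := by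
    have hdm : ∀ d : S, MeasurableSet ((dc Q d.1).toSet \ U) :=
      fun d => (measurable_toSet _).diff hUm
    have heq : ∀ d : S, volume ((dc Q d.1).toSet \ U) =
        ∫⁻ x, volume (Prod.mk x ⁻¹' ((dc Q d.1).toSet \ U)) := by
      intro d
      rw [Measure.volume_eq_prod, Measure.prod_apply (hdm d)]
    calc ∑' d : S, volume ((dc Q d.1).toSet \ U)
        = ∑' d : S, ∫⁻ x, volume (Prod.mk x ⁻¹' ((dc Q d.1).toSet \ U)) := tsum_congr heq
      _ = ∫⁻ x, ∑' d : S, volume (Prod.mk x ⁻¹' ((dc Q d.1).toSet \ U)) :=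
          (lintegral_tsum fun d => (measurable_measure_prodMk_left (hdm d)).aemeasurable).symm
      _ ≤ ∫⁻ x, (m : ℝ≥0∞)⁻¹ * volume (Prod.mk x ⁻¹' U) := by
          refine lintegral_mono fun x => ?_
          -- set up the 1-D lemma at the slice x
          set cnd : S → Prop := fun d =>
            ∀ i, x i ∈ Set.Ioo ((dc Q d.1).x i) ((dc Q d.1).x i + (dc Q d.1).h) with hcnd
          set tt : S → ℝ := fun d => (dc Q d.1).t with htt
          set ll : S → ℝ := fun d => if cnd d then (dc Q d.1).h ^ 2 else 0 with hll
          have eqI : ∀ d : S, Prod.mk x ⁻¹' (dc Q d.1).toSet =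
              Set.Ioo (tt d) (tt d + ll d) := by
            intro d
            rw [slice_toSet]
            by_cases h : cnd d
            · rw [if_pos h, hll]; simp only [if_pos h]; rfl
            · rw [if_neg h, hll]; simp only [if_neg h, add_zero, Set.Ioo_self]
          have eqS : ∀ d : S, Prod.mk x ⁻¹' ((dc Q d.1).stack m) =
              Set.Ioo (tt d + ll d) (tt d + ll d + m * ll d) := by
            intro d
            rw [slice_stack]
            by_cases h : cnd d
            · rw [if_pos h, hll]; simp only [if_pos h]; rfl
            · rw [if_neg h, hll]
              simp only [if_neg h, add_zero, mul_zero, Set.Ioo_self]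
          have eqU : Prod.mk x ⁻¹' U = ⋃ d : S, Set.Ioo (tt d + ll d) (tt d + ll d + m * ll d) := by
            rw [hU, Set.preimage_iUnion]
            exact Set.iUnion_congr eqS
          have hdI : Pairwise fun d d' : S =>
              Disjoint (Set.Ioo (tt d) (tt d + ll d)) (Set.Ioo (tt d') (tt d' + ll d')) := by
            intro d d' hne
            rw [← eqI d, ← eqI d']
            exact Disjoint.preimage _ (hdisj d.1 d.2 d'.1 d'.2 (fun h => hne (Subtype.ext h)))
          have := oneD m hm tt ll hdI
          rw [← eqU] at this
          refine le_trans (le_of_eq (tsum_congr fun d => ?_)) this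
          rw [Set.preimage_diff, eqI d, eqU]
      _ = (m : ℝ≥0∞)⁻¹ * ∫⁻ x, volume (Prod.mk x ⁻¹' U) :=
          lintegral_const_mul _ (measurable_measure_prodMk_left hUm)
      _ = (m : ℝ≥0∞)⁻¹ * volume U := by
          rw [← Measure.prod_apply hUm, ← Measure.volume_eq_prod]
  -- combine
  have hcoef : ((m : ℝ≥0∞) + 1) / m = 1 + (m : ℝ≥0∞)⁻¹ := by
    rw [ENNReal.add_div, ENNReal.div_self hmne hmnt, one_div]
  calc ∑' d : S, volume (dc Q d.1).toSet
      = ∑' d : S, (volume ((dc Q d.1).toSet ∩ U) + volume ((dc Q d.1).toSet \ U)) :=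
        tsum_congr fun d => (measure_inter_add_diff _ hUm).symm
    _ = (∑' d : S, volume ((dc Q d.1).toSet ∩ U)) + ∑' d : S, volume ((dc Q d.1).toSet \ U) :=
        ENNReal.tsum_add
    _ ≤ volume U + (m : ℝ≥0∞)⁻¹ * volume U := add_le_add h1 h2
    _ = ((m : ℝ≥0∞) + 1) / m * volume U := by rw [hcoef, add_mul, one_mul]



lemma anc_zero {d : D n} (hd : dvalid d) : anc d 0 = ((0, fun _ => 0, 0) : D n) := by
  obtain ⟨k, a, b⟩ := d
  simp only [anc, Prod.mk.injEq]
  refine ⟨trivial, funext fun i => Nat.div_eq_of_lt ?_, Nat.div_eq_of_lt ?_⟩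
  · simpa using hd.1 i
  · simpa using hd.2

lemma dc_parent_child (Q : PCube n) {d : D n} (hk : d.1 ≠ 0) :
    PCube.isChild (dc Q (anc d (d.1 - 1))) (dc Q d) := by
  obtain ⟨k, a, b⟩ := d
  simp only at hk
  have hanc : anc ((k, a, b) : D n) (k - 1) = ((k - 1, fun i => a i / 2, b / 4) : D n) := by
    simp only [anc]
    have h1 : k - (k - 1) = 1 := by omega
    rw [h1, pow_one, pow_one]
  refine ⟨fun i => ⟨a i % 2, by omega⟩, ⟨b % 4, by omega⟩, ?_⟩
  rw [hanc, dc_child]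
  congr 1
  simp only [Prod.mk.injEq]
  refine ⟨by omega, funext fun i => ?_, ?_⟩
  · show a i = 2 * (a i / 2) + (a i % 2)
    omega
  · show b = 4 * (b / 4) + (b % 4)
    omega

/-- The goodness predicate of the Calderón–Zygmund decomposition. -/
def gd (Q : PCube n) (A : Set (Ω n)) (δ' : ℝ≥0∞) (d : D n) : Prop :=
  volume ((dc Q d).toSet ∩ A) ≤ δ' * volume (dc Q d).toSet

end Stmt3Aux

open Stmt3Aux in
/-- Parabolic Calderón–Zygmund stacking lemma: if `A, B ⊆ Q` with `|A| ≤ δ|Q|`, and for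
every parabolic dyadic subcube `K` of `Q` (with predecessor `K̄`) the inequality
`|K ∩ A| > δ|K|` forces `K̄^m ⊆ B`, then `|A| ≤ ((m+1)/m) δ |B|`. -/
theorem stmt3 (n m : ℕ) (hm : 1 ≤ m) (Q : PCube n) (hQ : 0 < Q.h)
    (A B : Set ((Fin n → ℝ) × ℝ)) (hAm : MeasurableSet A) (hBm : MeasurableSet B)
    (hAQ : A ⊆ Q.toSet) (hBQ : B ⊆ Q.toSet)
    (δ : ℝ) (hδ0 : 0 < δ) (hδ1 : δ < 1)
    (hA : volume A ≤ ENNReal.ofReal δ * volume Q.toSet)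
    (hCZ : ∀ P K : PCube n, Relation.ReflTransGen PCube.isChild Q P → P.isChild K →
      ENNReal.ofReal δ * volume K.toSet < volume (K.toSet ∩ A) → P.stack m ⊆ B) :
    volume A ≤ ENNReal.ofReal ((m + 1) / m * δ) * volume B := by
  classical
  set δ' := ENNReal.ofReal δ with hδ'
  have hgd0 : gd Q A δ' (0, fun _ => 0, 0) := by
    show volume ((dc Q (0, fun _ => 0, 0)).toSet ∩ A) ≤ δ' * volume (dc Q (0, fun _ => 0, 0)).toSet
    rw [dc_zero, Set.inter_eq_right.mpr hAQ]
    exact hA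
  set sel : Set (D n) := {d | dvalid d ∧ ¬ gd Q A δ' d ∧ ∀ j < d.1, gd Q A δ' (anc d j)}
    with hsel
  set N : Set (Ω n) := ⋃ d ∈ sel, (dc Q d).toSet with hN
  have hNm : MeasurableSet N :=
    MeasurableSet.biUnion sel.to_countable fun d _ => measurable_toSet _
  have hselpos : ∀ d ∈ sel, d.1 ≠ 0 := by
    intro d hd h0
    obtain ⟨k, a, b⟩ := d
    simp only at h0
    subst h0
    have ha : a = fun _ => 0 := funext fun i => by have := hd.1.1 i; simpa using this
    have hb : b = 0 := by have := hd.1.2; simpa using this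
    exact hd.2.1 (by rw [ha, hb]; exact hgd0)
  -- A \ N is thin
  have hthin : ∀ d : D n, dvalid d →
      volume ((dc Q d).toSet ∩ (A \ N)) ≤ δ' * volume (dc Q d).toSet := by
    intro d hd
    by_cases hg : gd Q A δ' d
    · exact le_trans (measure_mono (Set.inter_subset_inter_right _ Set.diff_subset)) hg
    · have hex : ∃ j, ¬ gd Q A δ' (anc d j) := ⟨d.1, by rw [anc_self]; exact hg⟩
      set j0 := Nat.find hex with hj0
      have hj0le : j0 ≤ d.1 := Nat.find_min' hex (by rw [anc_self]; exact hg)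
      have hselmem : anc d j0 ∈ sel := by
        refine ⟨anc_valid hd hj0le, Nat.find_spec hex, ?_⟩
        intro j hj
        rw [anc_fst] at hj
        rw [anc_comp (le_of_lt hj) hj0le]
        by_contra hng
        have := Nat.find_min' hex hng
        omega
      have hsubN : (dc Q d).toSet ⊆ N :=
        fun p hp => Set.mem_biUnion hselmem (dc_subset_anc hQ d hj0le hp)
      have hempty : (dc Q d).toSet ∩ (A \ N) = ∅ := by
        ext p
        simp only [Set.mem_inter_iff, Set.mem_diff, Set.mem_empty_iff_false, iff_false, not_and]
        intro h1 h2
        exact fun h3 => (h3 (hsubN h1)).elim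
      rw [hempty]
      simp
  have hAN : volume (A \ N) = 0 :=
    thin_null hQ (hAm.diff hNm) (fun p hp => hAQ hp.1) hδ1 hthin
  -- parents of selected cubes
  set pt : D n → D n := fun d => anc d (d.1 - 1) with hpt
  have hptgood : ∀ d ∈ sel, gd Q A δ' (pt d) := fun d hd =>
    hd.2.2 (d.1 - 1) (by have := hselpos d hd; omega)
  have hptvalid : ∀ d ∈ sel, dvalid (pt d) := fun d hd => anc_valid hd.1 (by omega)
  have hstackB : ∀ d ∈ sel, (dc Q (pt d)).stack m ⊆ B := by
    intro d hd
    refine hCZ (dc Q (pt d)) (dc Q d) (reach Q (pt d) (hptvalid d hd))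
      (dc_parent_child Q (hselpos d hd)) ?_
    exact not_le.mp hd.2.1
  set Par : Set (D n) := pt '' sel with hPar
  set maxPar : Set (D n) :=
    {e ∈ Par | ∀ f ∈ Par, (dc Q e).toSet ⊆ (dc Q f).toSet → e = f} with hmaxPar
  have hmax_above : ∀ e ∈ Par, ∃ f ∈ maxPar, (dc Q e).toSet ⊆ (dc Q f).toSet := by
    intro e he
    have hex : ∃ k, ∃ f, (f ∈ Par ∧ f.1 = k) ∧ (dc Q e).toSet ⊆ (dc Q f).toSet :=
      ⟨e.1, e, ⟨he, rfl⟩, subset_rfl⟩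
    obtain ⟨f, ⟨hfPar, hfk⟩, hfsub⟩ := Nat.find_spec hex
    refine ⟨f, ⟨hfPar, ?_⟩, hfsub⟩
    intro g hg hsub
    have hlev : g.1 ≤ f.1 := level_le_of_subset hQ hsub
    rcases eq_or_lt_of_le hlev with hEq | hlt
    · exact eq_of_subset_level_eq hQ hEq.symm hsub
    · exfalso
      have := Nat.find_min' hex ⟨g, ⟨hg, rfl⟩, hfsub.trans hsub⟩
      omega
  have hanti : ∀ e ∈ maxPar, ∀ f ∈ maxPar, (dc Q e).toSet ⊆ (dc Q f).toSet → e = f :=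
    fun e he f hf hsub => he.2 f hf.1 hsub
  have hmdisj := disj_of_antichain hQ hanti
  have hNsub : N ⊆ ⋃ e ∈ maxPar, (dc Q e).toSet := by
    refine Set.iUnion₂_subset fun d hd => ?_
    obtain ⟨f, hf, hsub⟩ := hmax_above (pt d) ⟨d, hd, rfl⟩
    exact fun p hp => Set.mem_biUnion hf (hsub (dc_subset_anc hQ d (by omega) hp))
  have hstU : (⋃ e : maxPar, (dc Q e.1).stack m) ⊆ B := by
    refine Set.iUnion_subset fun e => ?_
    obtain ⟨d, hd, hde⟩ := e.2.1
    rw [← hde]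
    exact hstackB d hd
  have hmain : volume A ≤ δ' * (((m : ℝ≥0∞) + 1) / m * volume B) := by
    calc volume A ≤ volume (A \ N) + volume (A ∩ N) := by
          refine le_trans (measure_mono ?_) (measure_union_le _ _)
          intro p hp
          by_cases h : p ∈ N
          · exact Or.inr ⟨hp, h⟩
          · exact Or.inl ⟨hp, h⟩
      _ = volume (A ∩ N) := by rw [hAN, zero_add]
      _ ≤ volume (⋃ e ∈ maxPar, ((dc Q e).toSet ∩ A)) := by
          refine measure_mono fun p hp => ?_
          obtain ⟨e, he, hpe⟩ := Set.mem_iUnion₂.mp (hNsub hp.2)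
          exact Set.mem_biUnion he ⟨hpe, hp.1⟩
      _ ≤ ∑' e : maxPar, volume ((dc Q e.1).toSet ∩ A) :=
          measure_biUnion_le volume maxPar.to_countable _
      _ ≤ ∑' e : maxPar, δ' * volume (dc Q e.1).toSet := by
          refine ENNReal.tsum_le_tsum fun e => ?_
          obtain ⟨d, hd, hde⟩ := e.2.1
          rw [← hde]
          exact hptgood d hd
      _ = δ' * ∑' e : maxPar, volume (dc Q e.1).toSet := ENNReal.tsum_mul_left
      _ ≤ δ' * (((m : ℝ≥0∞) + 1) / m * volume (⋃ e : maxPar, (dc Q e.1).stack m)) :=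
          mul_le_mul_right (stack_bound m hm fun e he f hf hne => hmdisj e he f hf hne) δ'
      _ ≤ δ' * (((m : ℝ≥0∞) + 1) / m * volume B) :=
          mul_le_mul_right (mul_le_mul_right (measure_mono hstU) _) δ'
  have hcoef : ENNReal.ofReal ((m + 1) / m * δ) = δ' * (((m : ℝ≥0∞) + 1) / m) := by
    rw [ENNReal.ofReal_mul (by positivity)]
    have hmpos : (0:ℝ) < m := by exact_mod_cast hm
    rw [ENNReal.ofReal_div_of_pos hmpos,
      ENNReal.ofReal_add (by positivity) zero_le_one, ENNReal.ofReal_natCast,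
      ENNReal.ofReal_one, mul_comm]
  rw [hcoef, mul_assoc]
  exact hmain
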